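/- Algebraic step of Proposition 3. Let ψ, ψ̄, ρ, ρ̄ ∈ ℝ with |ψ| < 1 and |ψ̄| < 1. If (ψ+ρ)/(1−ψ) = (ψ̄+ρ̄)/(1−ψ̄) and ψ·(2−ψ)/(1−ψ)² = ψ̄·(2−ψ̄)/(1−ψ̄)², then ψ̄ = ψ and ρ̄ = ρ. -/

import Mathlib

/-- Algebraic step of Proposition 3: matching (ψ+ρ)/(1−ψ) and ψ(2−ψ)/(1−ψ)² with
|ψ| < 1 and |ψ̄| < 1 forces ψ̄ = ψ and ρ̄ = ρ. -/
theorem proposition3_algebraic_step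
    (ψ ψ' ρ ρ' : ℝ) (hψ : |ψ| < 1) (hψ' : |ψ'| < 1)
    (h1 : (ψ + ρ) / (1 - ψ) = (ψ' + ρ') / (1 - ψ'))
    (h2 : ψ * (2 - ψ) / (1 - ψ) ^ 2 = ψ' * (2 - ψ') / (1 - ψ') ^ 2) :
    ψ' = ψ ∧ ρ' = ρ := by
  have h1' := abs_lt.mp hψ
  have h2' := abs_lt.mp hψ'
  have hne : (1 - ψ) ≠ 0 := by linarith [h1'.2]
  have hne' : (1 - ψ') ≠ 0 := by linarith [h2'.2]
  have hpos : 0 < 1 - ψ := by linarith [h1'.2]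
  have hpos' : 0 < 1 - ψ' := by linarith [h2'.2]
  field_simp at h2 h1
  have hsq : (1 - ψ') ^ 2 = (1 - ψ) ^ 2 := by nlinarith [h2]
  have heq : 1 - ψ' = 1 - ψ := by
    nlinarith [hsq, hpos, hpos']
  have hψeq : ψ' = ψ := by linarith
  subst hψeq
  constructor
  · rfl
  · have := mul_left_cancel₀ hne' h1
    linarith
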